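/- Fix an inner product h₀ on ℝ^d and decompositions ℝ^d = E⊕E^⊥ = F⊕F^⊥, where the orthogonal complements are taken with respect to h₀. Let (h_n^E)_{n≥0} and (h_n^F)_{n≥0} be sequences of inner products on ℝ^d, let C≥1, C₂>0, A>1, 0<λ<μ and δ∈(0,1] be constants, and assume that for all n≥0: (i) dist(h_n^E,h_n^F) ≤ log(1+δ·C₂·A^n); (ii) ‖f‖_{h_n^F} ≤ Cλ^n‖f‖_{h₀} for all f∈F and ‖f′‖_{h_n^F} ≥ C^{-1}μ^n‖f′‖_{h₀} for all f′∈F^⊥; (iii) ‖e‖_{h_n^E} ≤ Cλ^n‖e‖_{h₀} for all e∈E and ‖e′‖_{h_n^E} ≥ C^{-1}μ^n‖e′‖_{h₀} for all e′∈E^⊥. Then dist_{h₀}(E,F) ≤ C²(2+C₂A)·δ^{log(μ/λ)/log A}. -/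

import Mathlib

/-- The norm associated to a (positive definite symmetric) bilinear form. -/
noncomputable def bilinNorm {d : ℕ}
    (h : EuclideanSpace ℝ (Fin d) →ₗ[ℝ] EuclideanSpace ℝ (Fin d) →ₗ[ℝ] ℝ)
    (v : EuclideanSpace ℝ (Fin d)) : ℝ :=
  Real.sqrt (h v v)

/-- Distance between two metrics (inner products):
`dist(h₁,h₂) = log sup{‖v₁‖_{h₂}, ‖v₂‖_{h₁} : ‖v₁‖_{h₁}=1, ‖v₂‖_{h₂}=1}`. -/
noncomputable def metricsDist {d : ℕ}
    (h₁ h₂ : EuclideanSpace ℝ (Fin d) →ₗ[ℝ] EuclideanSpace ℝ (Fin d) →ₗ[ℝ] ℝ) : ℝ :=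
  Real.log (sSup {r : ℝ | (∃ v, bilinNorm h₁ v = 1 ∧ r = bilinNorm h₂ v) ∨
    (∃ v, bilinNorm h₂ v = 1 ∧ r = bilinNorm h₁ v)})

/-- The distance `dist_{h₀}(E,F)` between two subspaces, where `h₀` is the standard
Euclidean inner product (used for the norms and the orthogonal complements). -/
noncomputable def subDistPerp {d : ℕ} (E F : Submodule ℝ (EuclideanSpace ℝ (Fin d))) : ℝ :=
  sSup ({r : ℝ | ∃ e ∈ E, ∃ f ∈ F, ∃ f' ∈ Fᗮ,
          e = f + f' ∧ ‖e‖ = 1 ∧ r = ‖f'‖} ∪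
        {r : ℝ | ∃ f ∈ F, ∃ e ∈ E, ∃ e' ∈ Eᗮ,
          f = e + e' ∧ ‖f‖ = 1 ∧ r = ‖e'‖})


open Real

variable {d : ℕ}

abbrev V (d : ℕ) := EuclideanSpace ℝ (Fin d)

section aux

variable (h : V d →ₗ[ℝ] V d →ₗ[ℝ] ℝ)

lemma bilin_nonneg (hp : ∀ v : V d, v ≠ 0 → 0 < h v v) (v : V d) : 0 ≤ h v v := by
  rcases eq_or_ne v 0 with rfl | hv
  · simp
  · exact (hp v hv).le

lemma bilinNorm_nonneg (v : V d) : 0 ≤ bilinNorm h v := Real.sqrt_nonneg _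

lemma bilinNorm_smul (a : ℝ) (v : V d) :
    bilinNorm h (a • v) = |a| * bilinNorm h v := by
  have : h (a • v) (a • v) = a ^ 2 * h v v := by
    simp [map_smul, smul_eq_mul]; ring
  rw [bilinNorm, this, Real.sqrt_mul (sq_nonneg a), Real.sqrt_sq_eq_abs, bilinNorm]

lemma bilin_expand (hs : ∀ v w, h v w = h w v) (v w : V d) :
    h (v + w) (v + w) = h v v + 2 * h v w + h w w := by
  simp only [map_add, LinearMap.add_apply]
  rw [hs w v]; ring

lemma bilinNorm_sq (hp : ∀ v : V d, v ≠ 0 → 0 < h v v) (v : V d) :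
    (bilinNorm h v) ^ 2 = h v v := Real.sq_sqrt (bilin_nonneg h hp v)

lemma bilin_cs (hs : ∀ v w, h v w = h w v) (hp : ∀ v : V d, v ≠ 0 → 0 < h v v)
    (v w : V d) : h v w ≤ bilinNorm h v * bilinNorm h w := by
  have key : discrim (h w w) (2 * h v w) (h v v) ≤ 0 := by
    apply discrim_le_zero
    intro t
    have h0 := bilin_nonneg h hp (v + t • w)
    have : h (v + t • w) (v + t • w)
        = h w w * (t * t) + 2 * h v w * t + h v v := by
      rw [bilin_expand h hs]
      simp [map_smul, smul_eq_mul]; ring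
    linarith [this ▸ h0]
  rw [discrim] at key
  have h1 : (h v w) ^ 2 ≤ h v v * h w w := by nlinarith
  have h2 : (bilinNorm h v * bilinNorm h w) ^ 2 = h v v * h w w := by
    rw [mul_pow, bilinNorm_sq h hp v, bilinNorm_sq h hp w]
  calc h v w ≤ |h v w| := le_abs_self _
    _ = Real.sqrt ((h v w) ^ 2) := (Real.sqrt_sq_eq_abs _).symm
    _ ≤ Real.sqrt ((bilinNorm h v * bilinNorm h w) ^ 2) :=
        Real.sqrt_le_sqrt (by rw [h2]; exact h1)
    _ = bilinNorm h v * bilinNorm h w := Real.sqrt_sq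
        (mul_nonneg (bilinNorm_nonneg h v) (bilinNorm_nonneg h w))

lemma bilinNorm_add_le (hs : ∀ v w, h v w = h w v) (hp : ∀ v : V d, v ≠ 0 → 0 < h v v)
    (v w : V d) : bilinNorm h (v + w) ≤ bilinNorm h v + bilinNorm h w := by
  have hcs := bilin_cs h hs hp v w
  have hexp := bilin_expand h hs v w
  have hle : h (v + w) (v + w) ≤ (bilinNorm h v + bilinNorm h w) ^ 2 := by
    rw [hexp]
    nlinarith [bilinNorm_sq h hp v, bilinNorm_sq h hp w]
  calc bilinNorm h (v + w) = Real.sqrt (h (v + w) (v + w)) := rfl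
    _ ≤ Real.sqrt ((bilinNorm h v + bilinNorm h w) ^ 2) := Real.sqrt_le_sqrt hle
    _ = bilinNorm h v + bilinNorm h w := Real.sqrt_sq
        (add_nonneg (bilinNorm_nonneg h v) (bilinNorm_nonneg h w))

lemma bilinNorm_neg (v : V d) : bilinNorm h (-v) = bilinNorm h v := by
  rw [show -v = (-1 : ℝ) • v by simp, bilinNorm_smul]; simp

lemma bilinNorm_continuous : Continuous (bilinNorm h) := by
  set g : V d →ₗ[ℝ] (V d →L[ℝ] ℝ) :=
    (LinearMap.toContinuousLinearMap : (V d →ₗ[ℝ] ℝ) ≃ₗ[ℝ] (V d →L[ℝ] ℝ)).toLinearMap.comp h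
  have hg : Continuous g := g.continuous_of_finiteDimensional
  have hq : Continuous fun v : V d => (g v) v := hg.clm_apply continuous_id
  have : (fun v : V d => (g v) v) = fun v => h v v := rfl
  exact Real.continuous_sqrt.comp (this ▸ hq)

lemma bilin_bounds (hp : ∀ v : V d, v ≠ 0 → 0 < h v v) :
    ∃ c K : ℝ, 0 < c ∧ 0 ≤ K ∧
      ∀ v : V d, c * ‖v‖ ≤ bilinNorm h v ∧ bilinNorm h v ≤ K * ‖v‖ := by
  rcases subsingleton_or_nontrivial (V d) with hsub | hnt
  · refine ⟨1, 1, one_pos, zero_le_one, fun v => ?_⟩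
    have hv : v = 0 := Subsingleton.elim v 0
    subst hv
    simp [bilinNorm]
  · have hsph : (Metric.sphere (0 : V d) 1).Nonempty :=
      NormedSpace.sphere_nonempty.mpr zero_le_one
    obtain ⟨u, hu, hmin⟩ := (isCompact_sphere (0 : V d) 1).exists_isMinOn hsph
      (bilinNorm_continuous h).continuousOn
    obtain ⟨w, hw, hmax⟩ := (isCompact_sphere (0 : V d) 1).exists_isMaxOn hsph
      (bilinNorm_continuous h).continuousOn
    have hu0 : u ≠ 0 := by
      intro h0
      rw [mem_sphere_zero_iff_norm] at hu
      simp [h0] at hu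
    have hc : 0 < bilinNorm h u := Real.sqrt_pos.mpr (hp u hu0)
    refine ⟨bilinNorm h u, bilinNorm h w, hc, bilinNorm_nonneg h w, fun v => ?_⟩
    rcases eq_or_ne v 0 with rfl | hv
    · simp [bilinNorm]
    · have hnv : 0 < ‖v‖ := norm_pos_iff.mpr hv
      set u' : V d := ‖v‖⁻¹ • v with hu'
      have hu'mem : u' ∈ Metric.sphere (0 : V d) 1 := by
        rw [mem_sphere_zero_iff_norm, hu', norm_smul]
        simp [abs_of_pos (inv_pos.mpr hnv), inv_mul_cancel₀ hnv.ne']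
      have hveq : bilinNorm h v = ‖v‖ * bilinNorm h u' := by
        rw [hu', bilinNorm_smul, abs_of_pos (inv_pos.mpr hnv), ← mul_assoc,
          mul_inv_cancel₀ hnv.ne', one_mul]
      constructor
      · have hm := hmin hu'mem
        rw [hveq, mul_comm (bilinNorm h u) ‖v‖]
        exact mul_le_mul_of_nonneg_left hm hnv.le
      · have hm := hmax hu'mem
        rw [hveq]
        calc ‖v‖ * bilinNorm h u' ≤ ‖v‖ * bilinNorm h w :=
              mul_le_mul_of_nonneg_left hm hnv.le
          _ = bilinNorm h w * ‖v‖ := mul_comm _ _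

end aux

lemma metricsDist_comm (h₁ h₂ : V d →ₗ[ℝ] V d →ₗ[ℝ] ℝ) :
    metricsDist h₁ h₂ = metricsDist h₂ h₁ := by
  unfold metricsDist
  congr 1
  congr 1
  ext r
  exact or_comm

lemma compare (h₁ h₂ : V d →ₗ[ℝ] V d →ₗ[ℝ] ℝ)
    (hp₁ : ∀ v : V d, v ≠ 0 → 0 < h₁ v v) (hp₂ : ∀ v : V d, v ≠ 0 → 0 < h₂ v v)
    {X : ℝ} (hX : 0 < X) (hd : metricsDist h₁ h₂ ≤ Real.log X) :
    ∀ v : V d, bilinNorm h₂ v ≤ X * bilinNorm h₁ v := by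
  set S : Set ℝ := {r : ℝ | (∃ v, bilinNorm h₁ v = 1 ∧ r = bilinNorm h₂ v) ∨
    (∃ v, bilinNorm h₂ v = 1 ∧ r = bilinNorm h₁ v)} with hS
  obtain ⟨c₁, K₁, hc₁, hK₁, hb₁⟩ := bilin_bounds h₁ hp₁
  obtain ⟨c₂, K₂, hc₂, hK₂, hb₂⟩ := bilin_bounds h₂ hp₂
  have hBdd : BddAbove S := by
    refine ⟨K₂ * c₁⁻¹ + K₁ * c₂⁻¹, ?_⟩
    rintro r (⟨w, hw, rfl⟩ | ⟨w, hw, rfl⟩)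
    · have h1 := (hb₁ w).1
      have h2 := (hb₂ w).2
      rw [hw] at h1
      have hwle : ‖w‖ ≤ c₁⁻¹ := by
        rw [show ‖w‖ = c₁⁻¹ * (c₁ * ‖w‖) by field_simp]
        calc c₁⁻¹ * (c₁ * ‖w‖) ≤ c₁⁻¹ * 1 :=
              mul_le_mul_of_nonneg_left h1 (by positivity)
          _ = c₁⁻¹ := mul_one _
      have : bilinNorm h₂ w ≤ K₂ * c₁⁻¹ := h2.trans (by
        exact mul_le_mul_of_nonneg_left hwle hK₂)
      have hpos : 0 ≤ K₁ * c₂⁻¹ := by positivity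
      linarith
    · have h1 := (hb₂ w).1
      have h2 := (hb₁ w).2
      rw [hw] at h1
      have hwle : ‖w‖ ≤ c₂⁻¹ := by
        rw [show ‖w‖ = c₂⁻¹ * (c₂ * ‖w‖) by field_simp]
        calc c₂⁻¹ * (c₂ * ‖w‖) ≤ c₂⁻¹ * 1 :=
              mul_le_mul_of_nonneg_left h1 (by positivity)
          _ = c₂⁻¹ := mul_one _
      have : bilinNorm h₁ w ≤ K₁ * c₂⁻¹ := h2.trans (by
        exact mul_le_mul_of_nonneg_left hwle hK₁)
      have hpos : 0 ≤ K₂ * c₁⁻¹ := by positivity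
      linarith
  have hsup : sSup S ≤ X := by
    by_contra hcon
    push_neg at hcon
    have : Real.log X < Real.log (sSup S) := Real.log_lt_log hX hcon
    have hmd : metricsDist h₁ h₂ = Real.log (sSup S) := rfl
    rw [hmd] at hd
    linarith
  intro v
  rcases eq_or_ne v 0 with rfl | hv
  · simp [bilinNorm]
  · set a : ℝ := bilinNorm h₁ v with ha
    have ha0 : 0 < a := Real.sqrt_pos.mpr (hp₁ v hv)
    set u : V d := a⁻¹ • v with hu
    have hu1 : bilinNorm h₁ u = 1 := by
      rw [hu, bilinNorm_smul, abs_of_pos (inv_pos.mpr ha0), ← ha, inv_mul_cancel₀ ha0.ne']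
    have hmem : bilinNorm h₂ u ∈ S := Or.inl ⟨u, hu1, rfl⟩
    have hle : bilinNorm h₂ u ≤ X := (le_csSup hBdd hmem).trans hsup
    have hveq : bilinNorm h₂ v = a * bilinNorm h₂ u := by
      rw [hu, bilinNorm_smul, abs_of_pos (inv_pos.mpr ha0), ← mul_assoc,
        mul_inv_cancel₀ ha0.ne', one_mul]
    rw [hveq, mul_comm X a]
    exact mul_le_mul_of_nonneg_left hle ha0.le

open RealInnerProductSpace in
lemma side_bound {d : ℕ} (E F : Submodule ℝ (V d))
    (hE hF : ℕ → (V d →ₗ[ℝ] V d →ₗ[ℝ] ℝ))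
    (hFsymm : ∀ n v w, hF n v w = hF n w v)
    (hFpos : ∀ n v, v ≠ 0 → 0 < hF n v v)
    (C C₂ A lam mu δ : ℝ)
    (hC : 1 ≤ C) (hC₂ : 0 < C₂) (hA : 1 < A) (hlam : 0 < lam) (hlm : lam < mu)
    (hδ0 : 0 < δ) (hδ1 : δ ≤ 1)
    (hcmp : ∀ n (v : V d), bilinNorm (hF n) v ≤ (1 + δ * C₂ * A ^ n) * bilinNorm (hE n) v)
    (hE1 : ∀ n : ℕ, ∀ e ∈ E, bilinNorm (hE n) e ≤ C * lam ^ n * ‖e‖)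
    (hF1 : ∀ n : ℕ, ∀ f ∈ F, bilinNorm (hF n) f ≤ C * lam ^ n * ‖f‖)
    (hF2 : ∀ n : ℕ, ∀ f' ∈ Fᗮ, C⁻¹ * mu ^ n * ‖f'‖ ≤ bilinNorm (hF n) f')
    {e f f' : V d} (he : e ∈ E) (hf : f ∈ F) (hf' : f' ∈ Fᗮ)
    (heq : e = f + f') (hnorm : ‖e‖ = 1) :
    ‖f'‖ ≤ C ^ 2 * (2 + C₂ * A) * δ ^ (Real.log (mu / lam) / Real.log A) := by
  have hC0 : 0 < C := lt_of_lt_of_le one_pos hC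
  have hmu : 0 < mu := hlam.trans hlm
  have hA0 : (0 : ℝ) < A := lt_trans one_pos hA
  have hinner : ⟪f, f'⟫ = 0 := Submodule.inner_right_of_mem_orthogonal hf hf'
  have hsq : ‖f‖ ^ 2 + ‖f'‖ ^ 2 = 1 := by
    have h2 := norm_add_sq_real f f'
    rw [← heq, hnorm, hinner] at h2
    nlinarith [h2]
  have hfle : ‖f‖ ≤ 1 := by nlinarith [norm_nonneg f, norm_nonneg f']
  have key : ∀ n : ℕ, ‖f'‖ ≤ C ^ 2 * (lam / mu) ^ n * (2 + δ * C₂ * A ^ n) := by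
    intro n
    have h1 : C⁻¹ * mu ^ n * ‖f'‖ ≤ bilinNorm (hF n) f' := hF2 n f' hf'
    have htri : bilinNorm (hF n) f' ≤ bilinNorm (hF n) e + bilinNorm (hF n) f := by
      have heq2 : f' = e + (-f) := by rw [heq]; abel
      rw [heq2]
      calc bilinNorm (hF n) (e + -f) ≤ bilinNorm (hF n) e + bilinNorm (hF n) (-f) :=
            bilinNorm_add_le _ (hFsymm n) (hFpos n) e (-f)
        _ = bilinNorm (hF n) e + bilinNorm (hF n) f := by rw [bilinNorm_neg]
    have h3 : bilinNorm (hF n) e ≤ (1 + δ * C₂ * A ^ n) * (C * lam ^ n) := by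
      calc bilinNorm (hF n) e ≤ (1 + δ * C₂ * A ^ n) * bilinNorm (hE n) e := hcmp n e
        _ ≤ (1 + δ * C₂ * A ^ n) * (C * lam ^ n) := by
            have h5 := hE1 n e he
            rw [hnorm, mul_one] at h5
            exact mul_le_mul_of_nonneg_left h5 (by positivity)
    have h4 : bilinNorm (hF n) f ≤ C * lam ^ n := by
      calc bilinNorm (hF n) f ≤ C * lam ^ n * ‖f‖ := hF1 n f hf
        _ ≤ C * lam ^ n * 1 := mul_le_mul_of_nonneg_left hfle (by positivity)
        _ = C * lam ^ n := mul_one _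
    have h5 : C⁻¹ * mu ^ n * ‖f'‖ ≤ C * lam ^ n * (2 + δ * C₂ * A ^ n) := by
      nlinarith [h1, htri, h3, h4]
    have hCmun : 0 < C⁻¹ * mu ^ n := by positivity
    have hdiv : ‖f'‖ ≤ (C * lam ^ n * (2 + δ * C₂ * A ^ n)) / (C⁻¹ * mu ^ n) := by
      rw [le_div_iff₀ hCmun]
      nlinarith [h5]
    calc ‖f'‖ ≤ (C * lam ^ n * (2 + δ * C₂ * A ^ n)) / (C⁻¹ * mu ^ n) := hdiv
      _ = C ^ 2 * (lam / mu) ^ n * (2 + δ * C₂ * A ^ n) := by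
          rw [div_pow]
          field_simp
  set t : ℝ := Real.log (mu / lam) / Real.log A with ht
  have hlogA : 0 < Real.log A := Real.log_pos hA
  have htnonneg : 0 ≤ t := by
    apply div_nonneg _ hlogA.le
    apply Real.log_nonneg
    rw [le_div_iff₀ hlam]
    linarith
  set n : ℕ := ⌈Real.logb A δ⁻¹⌉₊ with hn
  have hδinv : 1 ≤ δ⁻¹ := (one_le_inv₀ hδ0).mpr hδ1
  have hlogb0 : 0 ≤ Real.logb A δ⁻¹ := Real.logb_nonneg hA hδinv
  have h5 : δ⁻¹ ≤ A ^ n := by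
    have h1 : δ⁻¹ = A ^ Real.logb A δ⁻¹ := (Real.rpow_logb hA0 (ne_of_gt hA) (by positivity)).symm
    rw [h1, show (A : ℝ) ^ n = A ^ ((n : ℕ) : ℝ) from (Real.rpow_natCast A n).symm]
    exact Real.rpow_le_rpow_of_exponent_le hA.le (Nat.le_ceil _)
  have h6 : δ * A ^ n ≤ A := by
    have h1 : (A : ℝ) ^ ((n : ℕ) : ℝ) ≤ A ^ (Real.logb A δ⁻¹ + 1) :=
      Real.rpow_le_rpow_of_exponent_le hA.le (le_of_lt (Nat.ceil_lt_add_one hlogb0))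
    rw [Real.rpow_add hA0, Real.rpow_logb hA0 (ne_of_gt hA) (by positivity),
      Real.rpow_one] at h1
    rw [show (A : ℝ) ^ n = A ^ ((n : ℕ) : ℝ) from (Real.rpow_natCast A n).symm]
    calc δ * A ^ ((n : ℕ) : ℝ) ≤ δ * (δ⁻¹ * A) := mul_le_mul_of_nonneg_left h1 hδ0.le
      _ = A := by field_simp
  have h7 : (lam / mu) ^ n ≤ δ ^ t := by
    have hAt : A ^ (-t) = lam / mu := by
      have hlog : Real.log A * (-t) = -Real.log (mu / lam) := by
        rw [ht]
        field_simp
      rw [Real.rpow_def_of_pos hA0, hlog, Real.exp_neg,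
        Real.exp_log (by positivity : (0 : ℝ) < mu / lam), inv_div]
    have h8 : (A : ℝ) ^ (-((n : ℕ) : ℝ)) ≤ δ := by
      rw [Real.rpow_neg hA0.le, Real.rpow_natCast]
      rw [← inv_inv δ]
      exact inv_anti₀ (by positivity) h5
    calc (lam / mu) ^ n = (A ^ (-t)) ^ n := by rw [hAt]
      _ = A ^ (-t * ((n : ℕ) : ℝ)) := by
          rw [← Real.rpow_natCast (A ^ (-t)) n, ← Real.rpow_mul hA0.le]
      _ = (A ^ (-((n : ℕ) : ℝ))) ^ t := by
          rw [← Real.rpow_mul hA0.le]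
          congr 1
          ring
      _ ≤ δ ^ t := Real.rpow_le_rpow (by positivity) h8 htnonneg
  calc ‖f'‖ ≤ C ^ 2 * (lam / mu) ^ n * (2 + δ * C₂ * A ^ n) := key n
    _ ≤ C ^ 2 * δ ^ t * (2 + C₂ * A) := by
        apply mul_le_mul
        · exact mul_le_mul_of_nonneg_left h7 (by positivity)
        · nlinarith [h6]
        · positivity
        · positivity
    _ = C ^ 2 * (2 + C₂ * A) * δ ^ t := by ring

theorem metrics_dist_bound {d : ℕ}
    (E F : Submodule ℝ (EuclideanSpace ℝ (Fin d)))
    (hE hF : ℕ → (EuclideanSpace ℝ (Fin d) →ₗ[ℝ] EuclideanSpace ℝ (Fin d) →ₗ[ℝ] ℝ))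
    -- the `h_n^E` and `h_n^F` are inner products (symmetric positive definite)
    (hEsymm : ∀ n v w, hE n v w = hE n w v)
    (hEpos : ∀ n v, v ≠ 0 → 0 < hE n v v)
    (hFsymm : ∀ n v w, hF n v w = hF n w v)
    (hFpos : ∀ n v, v ≠ 0 → 0 < hF n v v)
    (C C₂ A lam mu δ : ℝ)
    (hC : 1 ≤ C) (hC₂ : 0 < C₂) (hA : 1 < A) (hlam : 0 < lam) (hlm : lam < mu)
    (hδ0 : 0 < δ) (hδ1 : δ ≤ 1)
    -- (i) distance between the metrics
    (hdist : ∀ n : ℕ, metricsDist (hE n) (hF n) ≤ Real.log (1 + δ * C₂ * A ^ n))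
    -- (ii) growth estimates for F
    (hF1 : ∀ n : ℕ, ∀ f ∈ F, bilinNorm (hF n) f ≤ C * lam ^ n * ‖f‖)
    (hF2 : ∀ n : ℕ, ∀ f' ∈ Fᗮ, C⁻¹ * mu ^ n * ‖f'‖ ≤ bilinNorm (hF n) f')
    -- (iii) growth estimates for E
    (hE1 : ∀ n : ℕ, ∀ e ∈ E, bilinNorm (hE n) e ≤ C * lam ^ n * ‖e‖)
    (hE2 : ∀ n : ℕ, ∀ e' ∈ Eᗮ, C⁻¹ * mu ^ n * ‖e'‖ ≤ bilinNorm (hE n) e') :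
    subDistPerp E F ≤ C ^ 2 * (2 + C₂ * A) * δ ^ (Real.log (mu / lam) / Real.log A) := by
  have hcmpEF : ∀ n (v : EuclideanSpace ℝ (Fin d)),
      bilinNorm (hF n) v ≤ (1 + δ * C₂ * A ^ n) * bilinNorm (hE n) v := fun n =>
    compare (hE n) (hF n) (hEpos n) (hFpos n) (by positivity) (hdist n)
  have hcmpFE : ∀ n (v : EuclideanSpace ℝ (Fin d)),
      bilinNorm (hE n) v ≤ (1 + δ * C₂ * A ^ n) * bilinNorm (hF n) v := fun n =>
    compare (hF n) (hE n) (hFpos n) (hEpos n) (by positivity)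
      (by rw [metricsDist_comm]; exact hdist n)
  apply Real.sSup_le
  · rintro r (⟨e, he, f, hf, f', hf', heq, hnorm, rfl⟩ | ⟨f, hf, e, he, e', he', heq, hnorm, rfl⟩)
    · exact side_bound E F hE hF hFsymm hFpos C C₂ A lam mu δ hC hC₂ hA hlam hlm hδ0 hδ1
        hcmpEF hE1 hF1 hF2 he hf hf' heq hnorm
    · exact side_bound F E hF hE hEsymm hEpos C C₂ A lam mu δ hC hC₂ hA hlam hlm hδ0 hδ1
        hcmpFE hF1 hE1 hE2 hf he he' heq hnorm
  · positivity
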